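/- For every integer n ≥ 2 there exists a school choice problem P with n students and n schools, each of quota 1 (every student ranking all n schools above the null school), such that: (i) DA(P) is the unique stable matching of P and is Pareto-efficient; (ii) Σ_{i∈I} rk_i(DA_i(P)) = n(n+1)/2; and (iii) there exists a Pareto-efficient matching μ of P with Σ_{i∈I} rk_i(μ(i)) = n + 1. Consequently, every stable-dominating matching ν of P satisfies Σ_{i∈I} rk_i(ν(i)) = n(n+1)/2, so the rank-inefficiency ratio of any stable-dominating and Pareto-efficient mechanism attains n/2. -/

import Mathlib

/-!
A school choice problem: finitely many students `I` and schools `S`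
(with a distinguished null school of quota `|I|`).  Each student `i` has a
strict preference over schools represented by its rank function
`rk i : S → ℕ` (a bijection onto `{1, …, |S|}`, where rank 1 is the most
preferred school); each school `s` has a quota `quota s ≥ 1` and a strict
priority over students represented by `prio s : I → ℕ`
(`i ▷_s j` iff `prio s i < prio s j`).
-/
structure SchoolChoice (I S : Type) [Fintype I] [Fintype S]
    [DecidableEq I] [DecidableEq S] where
  nullSchool : S
  quota : S → ℕ
  rk : I → S → ℕ
  prio : S → I → ℕ
  quota_pos : ∀ s : S, 1 ≤ quota s
  quota_null : quota nullSchool = Fintype.card I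
  rk_inj : ∀ i : I, Function.Injective (rk i)
  rk_mem : ∀ (i : I) (s : S), rk i s ∈ Finset.Icc 1 (Fintype.card S)
  prio_inj : ∀ s : S, Function.Injective (prio s)

namespace SchoolChoice

open scoped Classical

variable {I S : Type} [Fintype I] [Fintype S] [DecidableEq I] [DecidableEq S]

/-- `μ` is a matching: no school is assigned more students than its quota. -/
def IsMatching (P : SchoolChoice I S) (μ : I → S) : Prop :=
  ∀ s : S, (Finset.univ.filter fun i => μ i = s).card ≤ P.quota s

/-- Given the sets `R i` of schools that have rejected student `i` so far,
student `i` proposes to her most preferred school that has not rejected her. -/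
noncomputable def propose (P : SchoolChoice I S) (R : I → Finset S) (i : I) : S :=
  if h : (Finset.univ \ R i).Nonempty then
    (Finset.exists_min_image (Finset.univ \ R i) (P.rk i) h).choose
  else P.nullSchool

/-- At the DA round with rejection state `R`, school `s` rejects student `i`:
`i` applies to `s` and at least `quota s` applicants to `s` have higher priority. -/
def rejectsAt (P : SchoolChoice I S) (R : I → Finset S) (s : S) (i : I) : Prop :=
  P.propose R i = s ∧
    P.quota s ≤ (Finset.univ.filter fun j =>
      P.propose R j = s ∧ P.prio s j < P.prio s i).card

/-- One round of student-proposing Deferred Acceptance: record new rejections. -/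
noncomputable def stepR (P : SchoolChoice I S) (R : I → Finset S) : I → Finset S :=
  fun i => R i ∪ (Finset.univ.filter fun s => P.rejectsAt R s i)

/-- Rejection state after `n` rounds of Deferred Acceptance. -/
noncomputable def daR (P : SchoolChoice I S) : ℕ → I → Finset S
  | 0 => fun _ => (∅ : Finset S)
  | n + 1 => P.stepR (P.daR n)

/-- The outcome of the student-proposing Deferred Acceptance algorithm:
iterate rounds until no rejection occurs (which happens within
`|I|·|S| + 1` rounds); each student is matched to the school holding her. -/
noncomputable def DA (P : SchoolChoice I S) : I → S :=
  P.propose (P.daR (Fintype.card I * Fintype.card S + 1))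

/-- A matching `ν` is stable-dominating if every student weakly prefers
`ν` to the DA outcome. -/
def StableDominating (P : SchoolChoice I S) (ν : I → S) : Prop :=
  P.IsMatching ν ∧ ∀ i : I, P.rk i (ν i) ≤ P.rk i (P.DA i)

/-- Student `i` is unimprovable: every stable-dominating matching assigns `i`
to her DA school. -/
def Unimprovable (P : SchoolChoice I S) (i : I) : Prop :=
  ∀ ν : I → S, P.StableDominating ν → ν i = P.DA i

/-- Edge of the envy digraph `G^DA(P)`: `i` prefers `j`'s DA school to her own. -/
def Envy (P : SchoolChoice I S) (i j : I) : Prop :=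
  P.rk i (P.DA j) < P.rk i (P.DA i)

/-- Student `i` lies on a directed cycle of the envy digraph `G^DA(P)`. -/
def OnCycle (P : SchoolChoice I S) (i : I) : Prop :=
  ∃ (m : ℕ) (c : ℕ → I), 0 < m ∧ c 0 = i ∧ c m = i ∧
    ∀ k < m, P.Envy (c k) (c (k + 1))

/-- Student `i` desires school `s` in matching `μ`. -/
def Desires (P : SchoolChoice I S) (μ : I → S) (i : I) (s : S) : Prop :=
  P.rk i s < P.rk i (μ i)

/-- `μ` is non-wasteful: every desired school is filled to quota. -/
def NonWasteful (P : SchoolChoice I S) (μ : I → S) : Prop :=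
  ∀ s : S, (∃ i : I, P.Desires μ i s) →
    (Finset.univ.filter fun i => μ i = s).card = P.quota s

/-- `μ` is stable: a non-wasteful matching with no priority violations. -/
def Stable (P : SchoolChoice I S) (μ : I → S) : Prop :=
  P.IsMatching μ ∧ P.NonWasteful μ ∧
    ¬ ∃ (i j : I) (s : S), P.Desires μ i s ∧ μ j = s ∧ P.prio s i < P.prio s j

/-- `μ` Pareto-dominates `ν`. -/
def ParetoDominates (P : SchoolChoice I S) (μ ν : I → S) : Prop :=
  (∀ i : I, P.rk i (μ i) ≤ P.rk i (ν i)) ∧ ∃ i : I, P.rk i (μ i) < P.rk i (ν i)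

/-- `μ` is a Pareto-efficient matching. -/
def ParetoEfficient (P : SchoolChoice I S) (μ : I → S) : Prop :=
  P.IsMatching μ ∧ ∀ ν : I → S, P.IsMatching ν → ¬ P.ParetoDominates ν μ


section Generic
variable (P : SchoolChoice I S)

lemma propose_mem_and_min (R : I → Finset S) (i : I) (h : (Finset.univ \ R i).Nonempty) :
    P.propose R i ∈ Finset.univ \ R i ∧
      ∀ s ∈ Finset.univ \ R i, P.rk i (P.propose R i) ≤ P.rk i s := by
  have h2 := (Finset.exists_min_image (Finset.univ \ R i) (P.rk i) h).choose_spec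
  rw [propose, dif_pos h]
  exact h2

lemma not_rejectsAt_null (R : I → Finset S) (i : I) : ¬ P.rejectsAt R P.nullSchool i := by
  rintro ⟨-, hq⟩
  have hsub : (Finset.univ.filter fun j =>
      P.propose R j = P.nullSchool ∧ P.prio P.nullSchool j < P.prio P.nullSchool i)
      ⊆ Finset.univ.erase i := by
    intro j hj
    simp only [Finset.mem_filter] at hj
    refine Finset.mem_erase.mpr ⟨?_, Finset.mem_univ j⟩
    rintro rfl; exact lt_irrefl _ hj.2.2
  have hc := Finset.card_le_card hsub
  rw [Finset.card_erase_of_mem (Finset.mem_univ i), Finset.card_univ] at hc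
  rw [P.quota_null] at hq
  have hpos : 0 < Fintype.card I := Fintype.card_pos_iff.mpr ⟨i⟩
  omega

lemma null_not_mem_daR (t : ℕ) (i : I) : P.nullSchool ∉ P.daR t i := by
  induction t with
  | zero => simp [daR]
  | succ t ih =>
    show P.nullSchool ∉ P.stepR (P.daR t) i
    rw [stepR]
    intro h
    rcases Finset.mem_union.mp h with h | h
    · exact ih h
    · exact P.not_rejectsAt_null _ i (Finset.mem_filter.mp h).2

lemma daR_compl_nonempty (t : ℕ) (i : I) : (Finset.univ \ P.daR t i).Nonempty :=
  ⟨P.nullSchool, Finset.mem_sdiff.mpr ⟨Finset.mem_univ _, P.null_not_mem_daR t i⟩⟩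

lemma daR_subset (t : ℕ) (i : I) : P.daR t i ⊆ P.daR (t+1) i := by
  show P.daR t i ⊆ P.stepR (P.daR t) i
  rw [stepR]
  exact Finset.subset_union_left

lemma propose_persist (t : ℕ) (i : I)
    (h : P.propose (P.daR t) i ∉ P.daR (t+1) i) :
    P.propose (P.daR (t+1)) i = P.propose (P.daR t) i := by
  have h0 := P.propose_mem_and_min (P.daR t) i (P.daR_compl_nonempty t i)
  have h1 := P.propose_mem_and_min (P.daR (t+1)) i (P.daR_compl_nonempty (t+1) i)
  have le1 : P.rk i (P.propose (P.daR (t+1)) i) ≤ P.rk i (P.propose (P.daR t) i) :=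
    h1.2 _ (Finset.mem_sdiff.mpr ⟨Finset.mem_univ _, h⟩)
  have le2 : P.rk i (P.propose (P.daR t) i) ≤ P.rk i (P.propose (P.daR (t+1)) i) := by
    apply h0.2
    have := Finset.mem_sdiff.mp h1.1
    exact Finset.mem_sdiff.mpr ⟨Finset.mem_univ _, fun hc => this.2 (P.daR_subset t i hc)⟩
  exact P.rk_inj i (le_antisymm le1 le2)

def Inv (t : ℕ) : Prop := ∀ (i : I) (s : S), s ∈ P.daR t i →
  ∃ j : I, P.propose (P.daR t) j = s ∧ P.prio s j < P.prio s i

lemma inv_all (t : ℕ) : P.Inv t := by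
  induction t with
  | zero => intro i s hs; simp [daR] at hs
  | succ t ht =>
    intro i s hs
    have hj : ∃ j : I, P.propose (P.daR t) j = s ∧ P.prio s j < P.prio s i := by
      have hs' : s ∈ P.stepR (P.daR t) i := hs
      rw [stepR] at hs'
      rcases Finset.mem_union.mp hs' with h | h
      · exact ht i s h
      · have hrej := (Finset.mem_filter.mp h).2
        have hpos : 0 < (Finset.univ.filter fun j =>
            P.propose (P.daR t) j = s ∧ P.prio s j < P.prio s i).card :=
          lt_of_lt_of_le (P.quota_pos s) hrej.2
        obtain ⟨j, hj⟩ := Finset.card_pos.mp hpos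
        have := (Finset.mem_filter.mp hj).2
        exact ⟨j, this.1, this.2⟩
    obtain ⟨j, hjs, hji⟩ := hj
    have hjApp : j ∈ Finset.univ.filter fun k => P.propose (P.daR t) k = s :=
      Finset.mem_filter.mpr ⟨Finset.mem_univ _, hjs⟩
    obtain ⟨j', hj'A, hj'min⟩ := Finset.exists_min_image _ (P.prio s) ⟨j, hjApp⟩
    have hj's : P.propose (P.daR t) j' = s := (Finset.mem_filter.mp hj'A).2
    have hnotrej : ¬ P.rejectsAt (P.daR t) s j' := by
      rintro ⟨-, hc⟩
      have hpos : 0 < (Finset.univ.filter fun k =>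
          P.propose (P.daR t) k = s ∧ P.prio s k < P.prio s j').card :=
        lt_of_lt_of_le (P.quota_pos s) hc
      obtain ⟨k, hk⟩ := Finset.card_pos.mp hpos
      have hk' := (Finset.mem_filter.mp hk).2
      have : k ∈ Finset.univ.filter fun k => P.propose (P.daR t) k = s :=
        Finset.mem_filter.mpr ⟨Finset.mem_univ _, hk'.1⟩
      exact absurd (hj'min k this) (not_le.mpr hk'.2)
    have hpersist : P.propose (P.daR (t+1)) j' = s := by
      rw [← hj's]
      apply P.propose_persist
      rw [hj's]
      show s ∉ P.stepR (P.daR t) j'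
      rw [stepR]
      intro hmem
      rcases Finset.mem_union.mp hmem with h | h
      · have := (P.propose_mem_and_min (P.daR t) j' (P.daR_compl_nonempty t j')).1
        rw [hj's] at this
        exact (Finset.mem_sdiff.mp this).2 h
      · exact hnotrej (Finset.mem_filter.mp h).2
    exact ⟨j', hpersist, lt_of_le_of_lt (hj'min j hjApp) hji⟩

lemma daR_fix_forever {u : ℕ} (h : P.daR (u+1) = P.daR u) : ∀ v, P.daR (u+v) = P.daR u := by
  intro v
  induction v with
  | zero => rfl
  | succ v ih =>
    show P.stepR (P.daR (u+v)) = P.daR u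
    rw [ih]
    exact h

lemma exists_fixpoint : P.stepR (P.daR (Fintype.card I * Fintype.card S + 1))
    = P.daR (Fintype.card I * Fintype.card S + 1) := by
  set N := Fintype.card I * Fintype.card S + 1 with hN
  have key : ∀ t : ℕ, t ≤ ∑ i : I, (P.daR t i).card ∨ ∃ u, u < t ∧ P.daR (u+1) = P.daR u := by
    intro t
    induction t with
    | zero => left; omega
    | succ t ih =>
      rcases ih with h | ⟨u, hu, hfix⟩
      · by_cases hf : P.daR (t+1) = P.daR t
        · exact Or.inr ⟨t, Nat.lt_succ_self t, hf⟩
        · left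
          have hne : ∃ i, P.daR t i ≠ P.daR (t+1) i := by
            by_contra hc
            push_neg at hc
            exact hf (funext fun i => (hc i).symm)
          obtain ⟨i0, hi0⟩ := hne
          have hlt : ∑ i : I, (P.daR t i).card < ∑ i : I, (P.daR (t+1) i).card := by
            apply Finset.sum_lt_sum
            · intro i _; exact Finset.card_le_card (P.daR_subset t i)
            · exact ⟨i0, Finset.mem_univ _,
                Finset.card_lt_card (HasSubset.Subset.ssubset_of_ne (P.daR_subset t i0) hi0)⟩
          omega
      · exact Or.inr ⟨u, Nat.lt_succ_of_lt hu, hfix⟩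
  have hbound : ∑ i : I, (P.daR N i).card ≤ Fintype.card I * Fintype.card S := by
    calc ∑ i : I, (P.daR N i).card ≤ ∑ _i : I, Fintype.card S :=
          Finset.sum_le_sum (fun i _ => Finset.card_le_univ _)
      _ = Fintype.card I * Fintype.card S := by
          rw [Finset.sum_const, Finset.card_univ, smul_eq_mul]
  rcases key N with h | ⟨u, hu, hfix⟩
  · omega
  · obtain ⟨v, hv⟩ : ∃ v, N = u + v := ⟨N - u, by omega⟩
    have h1 : P.daR N = P.daR u := by rw [hv]; exact P.daR_fix_forever hfix v
    calc P.stepR (P.daR N) = P.daR (N+1) := rfl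
      _ = P.daR u := by rw [show N+1 = u + (v+1) by omega]; exact P.daR_fix_forever hfix (v+1)
      _ = P.daR N := h1.symm

end Generic

section Stability
variable (P : SchoolChoice I S)

lemma DA_stable (hq1 : ∀ s : S, s ≠ P.nullSchool → P.quota s = 1) : P.Stable P.DA := by
  have hfix := P.exists_fixpoint
  set N := Fintype.card I * Fintype.card S + 1 with hN
  have hDA : P.DA = P.propose (P.daR N) := rfl
  have hInv := P.inv_all N
  have hnorej : ∀ (s : S) (i : I), ¬ P.rejectsAt (P.daR N) s i := by
    intro s i hrej
    have hmem : s ∈ P.stepR (P.daR N) i := by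
      rw [stepR]
      exact Finset.mem_union_right _ (Finset.mem_filter.mpr ⟨Finset.mem_univ _, hrej⟩)
    rw [hfix] at hmem
    have hprop := (P.propose_mem_and_min (P.daR N) i (P.daR_compl_nonempty N i)).1
    rw [Finset.mem_sdiff] at hprop
    exact hprop.2 (hrej.1 ▸ hmem)
  have hmatch : P.IsMatching P.DA := by
    intro s
    by_cases hs : s = P.nullSchool
    · subst hs
      rw [P.quota_null]
      calc (Finset.univ.filter fun i => P.DA i = P.nullSchool).card
          ≤ Finset.univ.card := Finset.card_le_card (Finset.filter_subset _ _)
        _ = Fintype.card I := Finset.card_univ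
    · rw [hq1 s hs, Finset.card_le_one]
      intro a ha b hb
      have ha' := (Finset.mem_filter.mp ha).2
      have hb' := (Finset.mem_filter.mp hb).2
      by_contra hab
      have hne : P.prio s a ≠ P.prio s b := fun h => hab (P.prio_inj s h)
      rcases lt_or_gt_of_ne hne with hlt | hlt
      · refine hnorej s b ⟨hb', ?_⟩
        rw [hq1 s hs]
        refine le_trans ?_ (le_refl _)
        exact Finset.card_pos.mpr ⟨a, Finset.mem_filter.mpr ⟨Finset.mem_univ _, ha', hlt⟩⟩
      · refine hnorej s a ⟨ha', ?_⟩
        rw [hq1 s hs]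
        exact Finset.card_pos.mpr ⟨b, Finset.mem_filter.mpr ⟨Finset.mem_univ _, hb', hlt⟩⟩
  have hdes_mem : ∀ (i : I) (s : S), P.Desires P.DA i s → s ∈ P.daR N i := by
    intro i s hd
    by_contra hns
    have := (P.propose_mem_and_min (P.daR N) i (P.daR_compl_nonempty N i)).2 s
      (Finset.mem_sdiff.mpr ⟨Finset.mem_univ _, hns⟩)
    exact absurd hd (not_lt.mpr this)
  refine ⟨hmatch, ?_, ?_⟩
  · rintro s ⟨i, hdes⟩
    have hsmem := hdes_mem i s hdes
    have hs_ne : s ≠ P.nullSchool := fun h => P.null_not_mem_daR N i (h ▸ hsmem)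
    obtain ⟨j, hj1, hj2⟩ := hInv i s hsmem
    rw [hq1 s hs_ne]
    have h1 : 0 < (Finset.univ.filter fun i => P.DA i = s).card :=
      Finset.card_pos.mpr ⟨j, Finset.mem_filter.mpr ⟨Finset.mem_univ _, hj1⟩⟩
    have h2 := hmatch s
    rw [hq1 s hs_ne] at h2
    omega
  · rintro ⟨i, j, s, hdes, hjs, hprio⟩
    have hsmem := hdes_mem i s hdes
    have hs_ne : s ≠ P.nullSchool := fun h => P.null_not_mem_daR N i (h ▸ hsmem)
    obtain ⟨j', hj'1, hj'2⟩ := hInv i s hsmem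
    have hle := hmatch s
    rw [hq1 s hs_ne] at hle
    have hjj : j = j' := Finset.card_le_one.mp hle j
      (Finset.mem_filter.mpr ⟨Finset.mem_univ _, hjs⟩) j'
      (Finset.mem_filter.mpr ⟨Finset.mem_univ _, hj'1⟩)
    rw [hjj] at hprio
    omega

end Stability

section Concrete
open Finset

/-- Rank function of the example, on natural values. -/
def rkF (n a b : ℕ) : ℕ :=
  if b = n then n+1
  else if a = 0 then (if b = 1 then 1 else if b = 0 then 2 else b+1)
  else if b = 0 then n
  else if b ≤ a then a+1-b
  else b

/-- The example school-choice problem. -/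
noncomputable def exP (n : ℕ) (hn : 2 ≤ n) : SchoolChoice (Fin n) (Fin (n+1)) where
  nullSchool := Fin.last n
  quota s := if s.val = n then n else 1
  rk a b := rkF n a.val b.val
  prio s i := if i.val + 1 = s.val then 0 else i.val + 1
  quota_pos s := by split <;> omega
  quota_null := by simp [Fin.last]
  rk_inj := by
    intro i b c h
    have hb := b.isLt; have hc := c.isLt; have hi := i.isLt
    apply Fin.ext
    simp only [rkF] at h
    split_ifs at h <;> omega
  rk_mem := by
    intro i s
    have hb := s.isLt; have hi := i.isLt
    rw [Finset.mem_Icc, Fintype.card_fin]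
    simp only [rkF]
    split_ifs <;> omega
  prio_inj := by
    intro s i j h
    have hi := i.isLt; have hj := j.isLt
    apply Fin.ext
    simp only at h
    split_ifs at h <;> omega

variable {n : ℕ} (hn : 2 ≤ n)

lemma exP_quota_real {s : Fin (n+1)} (hs : s.val ≠ n) : (exP n hn).quota s = 1 := by
  show (if s.val = n then n else 1) = 1
  exact if_neg hs

lemma exP_rk (a : Fin n) (b : Fin (n+1)) : (exP n hn).rk a b = rkF n a.val b.val := rfl

lemma exP_null : (exP n hn).nullSchool = Fin.last n := rfl

lemma exP_prio (s : Fin (n+1)) (i : Fin n) :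
    (exP n hn).prio s i = if i.val + 1 = s.val then 0 else i.val + 1 := rfl

/-- If two students are matched to the same real school, they are equal. -/
lemma fiber_eq {μ : Fin n → Fin (n+1)} (hm : (exP n hn).IsMatching μ)
    {s : Fin (n+1)} (hs : s.val ≠ n) {i j : Fin n} (hi : μ i = s) (hj : μ j = s) : i = j := by
  by_contra hij
  have h2 : ({i, j} : Finset (Fin n)) ⊆ Finset.univ.filter (fun k => μ k = s) := by
    intro k hk
    rcases Finset.mem_insert.mp hk with rfl | hk
    · exact Finset.mem_filter.mpr ⟨Finset.mem_univ _, hi⟩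
    · rw [Finset.mem_singleton] at hk; subst hk
      exact Finset.mem_filter.mpr ⟨Finset.mem_univ _, hj⟩
  have hcard := Finset.card_le_card h2
  rw [Finset.card_insert_of_notMem (by simp [hij]), Finset.card_singleton] at hcard
  have hm' := hm s
  rw [exP_quota_real hn hs] at hm'
  omega

/-- The unique stable matching / DA outcome of the example. -/
def mustar (n : ℕ) : Fin n → Fin (n+1) :=
  fun a => if a.val = n - 1 then ⟨0, Nat.zero_lt_succ n⟩ else ⟨a.val + 1, Nat.succ_lt_succ a.isLt⟩

lemma rk_mustar (a : Fin n) : (exP n hn).rk a (mustar n a) = a.val + 1 := by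
  have ha := a.isLt
  rw [exP_rk]
  unfold mustar
  split_ifs with h
  · show rkF n a.val 0 = a.val + 1
    unfold rkF
    split_ifs <;> omega
  · show rkF n a.val (a.val + 1) = a.val + 1
    unfold rkF
    split_ifs <;> first | omega | exact ‹False›.elim

/-- Key induction: any matching where every student `a` has rank at most `a+1`
equals `mustar`. -/
lemma bound_eq {μ : Fin n → Fin (n+1)} (hm : (exP n hn).IsMatching μ)
    (hb : ∀ a : Fin n, (exP n hn).rk a (μ a) ≤ a.val + 1) :
    ∀ a : Fin n, μ a = mustar n a := by
  have key : ∀ m : ℕ, ∀ a : Fin n, a.val = m → μ a = mustar n a := by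
    intro m
    induction m using Nat.strong_induction_on with
    | _ m ih =>
    intro a ham
    have ha := a.isLt
    have hocc : ∀ c : Fin n, c < a → (μ c).val = c.val + 1 := by
      intro c hc
      have hc' : c.val < a.val := hc
      rw [ih c.val (by omega) c rfl]
      unfold mustar
      rw [if_neg (by omega : ¬ c.val = n - 1)]
    have hbv := (μ a).isLt
    have hr := hb a
    rw [exP_rk] at hr
    simp only [rkF] at hr
    by_cases h1 : (μ a).val = n
    · rw [if_pos h1] at hr; omega
    rw [if_neg h1] at hr
    by_cases h0 : (μ a).val = 0
    · have han : a.val = n - 1 := by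
        by_contra han
        rcases Nat.eq_zero_or_pos a.val with haz | hap
        · rw [if_pos haz, if_neg (by omega : ¬ (μ a).val = 1), if_pos h0] at hr
          omega
        · rw [if_neg (by omega : ¬ a.val = 0), if_pos h0] at hr
          omega
      unfold mustar
      rw [if_pos han]
      exact Fin.ext h0
    by_cases h2 : (μ a).val ≤ a.val
    · exfalso
      have hlt : (μ a).val - 1 < n := by omega
      have hca : (⟨(μ a).val - 1, hlt⟩ : Fin n) < a := by
        show (μ a).val - 1 < a.val; omega
      have hocc' := hocc _ hca
      simp only at hocc'
      have heq : μ ⟨(μ a).val - 1, hlt⟩ = μ a := Fin.ext (by omega)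
      have := fiber_eq hn hm (by omega : (μ a).val ≠ n) heq rfl
      rw [this] at hca
      exact lt_irrefl _ hca
    · have hval : (μ a).val = a.val + 1 := by
        rcases Nat.eq_zero_or_pos a.val with haz | hap
        · rw [if_pos haz, if_neg (by omega : ¬ (μ a).val = 0)] at hr
          by_cases hb1 : (μ a).val = 1
          · omega
          · rw [if_neg hb1] at hr; omega
        · rw [if_neg (by omega : ¬ a.val = 0), if_neg h0, if_neg h2] at hr
          omega
      unfold mustar
      rw [if_neg (by omega : ¬ a.val = n - 1)]
      exact Fin.ext hval
  exact fun a => key a.val a rfl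

end Concrete

section Concrete2
open Finset
variable {n : ℕ} (hn : 2 ≤ n)

lemma rk_real_le {a : Fin n} {s : Fin (n+1)} (hs : s.val ≠ n) : (exP n hn).rk a s ≤ n := by
  have := s.isLt; have := a.isLt
  rw [exP_rk]; unfold rkF; split_ifs <;> omega

lemma rk_null_eq (a : Fin n) {s : Fin (n+1)} (hs : s.val = n) : (exP n hn).rk a s = n + 1 := by
  rw [exP_rk]; unfold rkF; rw [if_pos hs]

lemma stable_occupied {μ : Fin n → Fin (n+1)} (hst : (exP n hn).Stable μ) :
    (∀ s : Fin (n+1), s.val ≠ n → ∃ i, μ i = s) ∧ ∀ i : Fin n, (μ i).val ≠ n := by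
  have hm := hst.1
  have hsum : (Finset.univ : Finset (Fin n)).card
      = ∑ s : Fin (n+1), (Finset.univ.filter fun i => μ i = s).card :=
    Finset.card_eq_sum_card_fiberwise (fun x _ => Finset.mem_univ (μ x))
  rw [Finset.card_univ, Fintype.card_fin] at hsum
  have h1 : ∀ s : Fin (n+1), s.val ≠ n → (Finset.univ.filter fun i => μ i = s).Nonempty := by
    intro s hs
    rw [Finset.nonempty_iff_ne_empty]
    intro hempty
    have hfib0 : (Finset.univ.filter fun i => μ i = s).card = 0 := by rw [hempty]; rfl
    have hnodes : ∀ i, ¬ (exP n hn).Desires μ i s := by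
      intro i hdes
      have := hst.2.1 s ⟨i, hdes⟩
      rw [exP_quota_real hn hs] at this
      omega
    have hreal : ∀ i, (μ i).val ≠ n := by
      intro i hin
      have h2 := hnodes i
      rw [Desires, not_lt] at h2
      have hs1 : (exP n hn).rk i s ≤ n := rk_real_le hn hs
      have hs2 : (exP n hn).rk i (μ i) = n + 1 := rk_null_eq hn i hin
      omega
    have hnull0 : (Finset.univ.filter fun i => μ i = Fin.last n).card = 0 := by
      rw [Finset.card_eq_zero, Finset.filter_eq_empty_iff]
      intro i _ hi
      exact hreal i (by rw [hi, Fin.val_last])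
    have hslast : s ≠ Fin.last n := fun h => hs (by rw [h, Fin.val_last])
    have e1 := Finset.add_sum_erase Finset.univ
      (fun s => (Finset.univ.filter fun i => μ i = s).card) (Finset.mem_univ s)
    have hlastmem : Fin.last n ∈ Finset.univ.erase s :=
      Finset.mem_erase.mpr ⟨hslast.symm, Finset.mem_univ _⟩
    have e2 := Finset.add_sum_erase (Finset.univ.erase s)
      (fun s => (Finset.univ.filter fun i => μ i = s).card) hlastmem
    have e3 : ∑ s' ∈ (Finset.univ.erase s).erase (Fin.last n),
        (Finset.univ.filter fun i => μ i = s').card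
        ≤ ((Finset.univ.erase s).erase (Fin.last n)).card * 1 := by
      rw [← smul_eq_mul]
      apply Finset.sum_le_card_nsmul
      intro x hx
      have hxlast : x ≠ Fin.last n := (Finset.mem_erase.mp hx).1
      have hxn : x.val ≠ n := fun h => hxlast (Fin.ext (by rw [h, Fin.val_last]))
      have := hm x
      rw [exP_quota_real hn hxn] at this
      exact this
    have ecard : ((Finset.univ.erase s).erase (Fin.last n)).card = n - 1 := by
      rw [Finset.card_erase_of_mem hlastmem, Finset.card_erase_of_mem (Finset.mem_univ s),
        Finset.card_univ, Fintype.card_fin]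
      omega
    rw [ecard] at e3
    omega
  have h2 : ∀ i, (μ i).val ≠ n := by
    have hge : ∀ s' ∈ Finset.univ.erase (Fin.last n),
        1 ≤ (Finset.univ.filter fun i => μ i = s').card := by
      intro s' hs'
      have : s'.val ≠ n := fun h => (Finset.mem_erase.mp hs').1 (Fin.ext (by rw [h, Fin.val_last]))
      exact Finset.card_pos.mpr (h1 s' this)
    have hbig := Finset.card_nsmul_le_sum (Finset.univ.erase (Fin.last n))
      (fun s => (Finset.univ.filter fun i => μ i = s).card) 1 hge
    rw [Finset.card_erase_of_mem (Finset.mem_univ _), Finset.card_univ, Fintype.card_fin,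
      smul_eq_mul, mul_one] at hbig
    have e1 := Finset.add_sum_erase Finset.univ
      (fun s => (Finset.univ.filter fun i => μ i = s).card) (Finset.mem_univ (Fin.last n))
    have hnull0 : (Finset.univ.filter fun i => μ i = Fin.last n).card = 0 := by omega
    intro i hi
    have : i ∈ Finset.univ.filter fun i => μ i = Fin.last n :=
      Finset.mem_filter.mpr ⟨Finset.mem_univ _, Fin.ext (by rw [hi, Fin.val_last])⟩
    have := Finset.card_pos.mpr ⟨i, this⟩
    omega
  refine ⟨fun s hs => ?_, h2⟩
  obtain ⟨i, hi⟩ := h1 s hs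
  exact ⟨i, (Finset.mem_filter.mp hi).2⟩

lemma stable_eq {μ : Fin n → Fin (n+1)} (hst : (exP n hn).Stable μ) :
    ∀ a : Fin n, μ a = mustar n a := by
  obtain ⟨hfull, hnn⟩ := stable_occupied hn hst
  have hm := hst.1
  have key : ∀ m : ℕ, ∀ a : Fin n, a.val = m → μ a = mustar n a := by
    intro m
    induction m using Nat.strong_induction_on with
    | _ m ih =>
    intro a ham
    have ha := a.isLt
    have hocc : ∀ c : Fin n, c < a → (μ c).val = c.val + 1 := by
      intro c hc
      have hc' : c.val < a.val := hc
      rw [ih c.val (by omega) c rfl]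
      unfold mustar
      rw [if_neg (by omega : ¬ c.val = n - 1)]
    have hv := (μ a).isLt
    have hvn := hnn a
    have hnotmid : ¬(1 ≤ (μ a).val ∧ (μ a).val ≤ a.val) := by
      rintro ⟨hx1, hx2⟩
      have hlt : (μ a).val - 1 < n := by omega
      have hca : (⟨(μ a).val - 1, hlt⟩ : Fin n) < a := by
        show (μ a).val - 1 < a.val; omega
      have hocc' := hocc _ hca
      simp only at hocc'
      have heq : μ ⟨(μ a).val - 1, hlt⟩ = μ a := Fin.ext (by omega)
      have := fiber_eq hn hm (by omega : (μ a).val ≠ n) heq rfl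
      rw [this] at hca
      exact lt_irrefl _ hca
    by_cases han : a.val = n - 1
    · unfold mustar
      rw [if_pos han]
      apply Fin.ext
      show (μ a).val = 0
      omega
    · by_cases hgoal : (μ a).val = a.val + 1
      · unfold mustar
        rw [if_neg han]
        exact Fin.ext hgoal
      exfalso
      have hsval : a.val + 1 < n + 1 := by omega
      set s : Fin (n+1) := ⟨a.val + 1, hsval⟩ with hsdef
      have hrs : (exP n hn).rk a s = a.val + 1 := by
        rw [exP_rk]
        show rkF n a.val (a.val+1) = a.val + 1
        unfold rkF
        split_ifs <;> first | omega | exact ‹False›.elim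
      have hdes : (exP n hn).Desires μ a s := by
        rw [Desires, hrs, exP_rk]
        unfold rkF
        split_ifs <;> omega
      obtain ⟨j, hj⟩ := hfull s (by show a.val + 1 ≠ n; omega)
      have hja : j ≠ a := by
        intro h
        apply hgoal
        rw [← h, hj, h]
      apply hst.2.2
      refine ⟨a, j, s, hdes, hj, ?_⟩
      rw [exP_prio, exP_prio]
      rw [if_pos (rfl : a.val + 1 = s.val)]
      rw [if_neg (fun h : j.val + 1 = s.val => hja (Fin.ext (by
        have : j.val + 1 = a.val + 1 := h
        omega)))]
      omega
  exact fun a => key a.val a rfl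

/-- The rank-efficient matching. -/
def mueff (n : ℕ) : Fin n → Fin (n+1) := fun a => ⟨a.val, Nat.lt_succ_of_lt a.isLt⟩

lemma rk_mueff (a : Fin n) :
    (exP n hn).rk a (mueff n a) = if a.val = 0 then 2 else 1 := by
  have := a.isLt
  rw [exP_rk]
  show rkF n a.val a.val = _
  unfold rkF
  split_ifs <;> omega

lemma mueff_matching : (exP n hn).IsMatching (mueff n) := by
  intro s
  by_cases hs : s.val = n
  · have : (exP n hn).quota s = n := if_pos hs
    rw [this]
    calc (Finset.univ.filter fun i => mueff n i = s).card
        ≤ (Finset.univ : Finset (Fin n)).card := Finset.card_le_card (Finset.filter_subset _ _)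
      _ = n := by rw [Finset.card_univ, Fintype.card_fin]
  · rw [exP_quota_real hn hs, Finset.card_le_one]
    intro a hb b hb'
    have h1 := (Finset.mem_filter.mp hb).2
    have h2 := (Finset.mem_filter.mp hb').2
    apply Fin.ext
    have e1 : a.val = s.val := by rw [← h1]; rfl
    have e2 : b.val = s.val := by rw [← h2]; rfl
    omega

end Concrete2

section Concrete3
open Finset
variable {n : ℕ} (hn : 2 ≤ n)

lemma exP_hq1 : ∀ s : Fin (n+1), s ≠ (exP n hn).nullSchool → (exP n hn).quota s = 1 := by
  intro s hs
  apply exP_quota_real hn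
  intro h
  exact hs (Fin.ext (by rw [h, exP_null hn, Fin.val_last]))

lemma DA_eq_mustar : (exP n hn).DA = mustar n :=
  funext (stable_eq hn ((exP n hn).DA_stable (exP_hq1 hn)))

lemma sum_aux (hpos : 0 < n) : ∑ a : Fin n, (a.val + 1) = n * (n + 1) / 2 := by
  rw [Fin.sum_univ_eq_sum_range (fun i => i + 1) n]
  have g := Finset.sum_range_id_mul_two n
  have e : ∑ i ∈ Finset.range n, (i + 1) = (∑ i ∈ Finset.range n, i) + n := by
    rw [Finset.sum_add_distrib, Finset.sum_const, Finset.card_range, smul_eq_mul, mul_one]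
  have e2 : n * (n + 1) = n * (n - 1) + 2 * n := by
    have h : n - 1 + 2 = n + 1 := by omega
    calc n * (n + 1) = n * (n - 1 + 2) := by rw [h]
      _ = n * (n - 1) + 2 * n := by ring
  rw [e]
  omega

lemma bound_sum {ν : Fin n → Fin (n+1)} (hm : (exP n hn).IsMatching ν)
    (hb : ∀ a : Fin n, (exP n hn).rk a (ν a) ≤ a.val + 1) :
    ∑ a : Fin n, (exP n hn).rk a (ν a) = n * (n + 1) / 2 := by
  have he := bound_eq hn hm hb
  calc ∑ a : Fin n, (exP n hn).rk a (ν a) = ∑ a : Fin n, (a.val + 1) :=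
        Finset.sum_congr rfl (fun a _ => by rw [he a]; exact rk_mustar hn a)
    _ = n * (n + 1) / 2 := sum_aux (by omega)

lemma DA_bound (a : Fin n) : (exP n hn).rk a ((exP n hn).DA a) = a.val + 1 := by
  rw [DA_eq_mustar hn]
  exact rk_mustar hn a

lemma DA_pareto : (exP n hn).ParetoEfficient ((exP n hn).DA) := by
  refine ⟨((exP n hn).DA_stable (exP_hq1 hn)).1, fun ν hν hdom => ?_⟩
  have hb : ∀ a : Fin n, (exP n hn).rk a (ν a) ≤ a.val + 1 := by
    intro a
    have h := hdom.1 a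
    rwa [DA_bound hn a] at h
  have he := bound_eq hn hν hb
  obtain ⟨i, hi⟩ := hdom.2
  rw [he i, DA_eq_mustar hn] at hi
  exact lt_irrefl _ hi

lemma rk_one_imp {a : Fin n} {b : Fin (n+1)} (ha1 : 1 ≤ a.val)
    (h : (exP n hn).rk a b = 1) : b.val = a.val := by
  have := b.isLt
  rw [exP_rk] at h
  unfold rkF at h
  split_ifs at h <;> omega

lemma rk_le_two_imp {a : Fin n} {b : Fin (n+1)} (ha0 : a.val = 0)
    (h : (exP n hn).rk a b ≤ 2) : b.val = 0 ∨ b.val = 1 := by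
  have := b.isLt
  rw [exP_rk] at h
  unfold rkF at h
  split_ifs at h <;> omega

lemma mueff_pareto : (exP n hn).ParetoEfficient (mueff n) := by
  refine ⟨mueff_matching hn, fun ν hν hdom => ?_⟩
  have hpos : ∀ a : Fin n, 1 ≤ a.val → ν a = mueff n a := by
    intro a h1
    have hd := hdom.1 a
    rw [rk_mueff hn, if_neg (by omega)] at hd
    have hge := (exP n hn).rk_mem a (ν a)
    rw [Finset.mem_Icc] at hge
    have hone : (exP n hn).rk a (ν a) = 1 := by omega
    exact Fin.ext (by rw [rk_one_imp hn h1 hone]; rfl)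
  have hall : ∀ a : Fin n, ν a = mueff n a := by
    intro a
    rcases Nat.eq_zero_or_pos a.val with h0 | h1
    · have hd := hdom.1 a
      rw [rk_mueff hn, if_pos h0] at hd
      rcases rk_le_two_imp hn h0 hd with hb | hb
      · exact Fin.ext (by rw [hb]; show (0:ℕ) = a.val; omega)
      · exfalso
        have honelt : (1:ℕ) < n := by omega
        have ho := hpos ⟨1, honelt⟩ (le_refl 1)
        have h1v : (ν ⟨1, honelt⟩).val = 1 := by rw [ho]; rfl
        have heqs : ν ⟨1, honelt⟩ = ν a := Fin.ext (by rw [hb, h1v])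
        have heq := fiber_eq hn hν (show (ν a).val ≠ n by omega) heqs rfl
        have : (1:ℕ) = a.val := by rw [← heq]
        omega
    · exact hpos a h1
  obtain ⟨i, hi⟩ := hdom.2
  rw [hall i] at hi
  exact lt_irrefl _ hi

lemma sum_mueff : ∑ a : Fin n, (exP n hn).rk a (mueff n a) = n + 1 := by
  calc ∑ a : Fin n, (exP n hn).rk a (mueff n a)
      = ∑ a : Fin n, (if (a : ℕ) = 0 then 2 else 1) :=
        Finset.sum_congr rfl (fun a _ => rk_mueff hn a)
    _ = ∑ i ∈ Finset.range n, (if i = 0 then 2 else 1) :=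
        Fin.sum_univ_eq_sum_range (fun i => if i = 0 then 2 else 1) n
    _ = n + 1 := by
        have e : ∀ i ∈ Finset.range n, (if i = 0 then 2 else 1) = (if i = 0 then 1 else 0) + 1 := by
          intro i _; split_ifs <;> rfl
        rw [Finset.sum_congr rfl e, Finset.sum_add_distrib, Finset.sum_const,
          Finset.card_range, smul_eq_mul, mul_one,
          Finset.sum_ite_eq' (Finset.range n) 0 (fun _ => 1),
          if_pos (Finset.mem_range.mpr (by omega : 0 < n))]
        omega

end Concrete3

end SchoolChoice

/-- For every `n ≥ 2` there is a school choice problem with `n`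
students and `n` (ordinary) schools of quota 1, every student ranking all `n`
schools above the null school, such that: (i) `DA(P)` is the unique stable
matching and is Pareto-efficient; (ii) `Σ_i rk_i(DA_i(P)) = n(n+1)/2`; (iii)
some Pareto-efficient matching `μ` has `Σ_i rk_i(μ i) = n + 1`.  Consequently
every stable-dominating matching `ν` has `Σ_i rk_i(ν i) = n(n+1)/2`, so the
rank-inefficiency ratio of any stable-dominating and Pareto-efficient
mechanism attains `n/2`. -/
theorem rank_inefficiency_lower_bound_example (n : ℕ) (hn : 2 ≤ n) :
    ∃ P : SchoolChoice (Fin n) (Fin (n + 1)),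
      P.nullSchool = Fin.last n ∧
      (∀ s : Fin (n + 1), s ≠ P.nullSchool → P.quota s = 1) ∧
      (∀ i : Fin n, P.rk i P.nullSchool = n + 1) ∧
      -- (i) DA is the unique stable matching and is Pareto-efficient
      P.Stable P.DA ∧
      (∀ μ : Fin n → Fin (n + 1), P.Stable μ → μ = P.DA) ∧
      P.ParetoEfficient P.DA ∧
      -- (ii) the sum of ranks under DA is n(n+1)/2
      (∑ i : Fin n, P.rk i (P.DA i)) = n * (n + 1) / 2 ∧
      -- (iii) a Pareto-efficient matching with rank sum n+1
      (∃ μ : Fin n → Fin (n + 1), P.ParetoEfficient μ ∧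
        (∑ i : Fin n, P.rk i (μ i)) = n + 1) ∧
      -- consequently, every stable-dominating matching has rank sum n(n+1)/2
      (∀ ν : Fin n → Fin (n + 1), P.StableDominating ν →
        (∑ i : Fin n, P.rk i (ν i)) = n * (n + 1) / 2) := by
  refine ⟨SchoolChoice.exP n hn, rfl, SchoolChoice.exP_hq1 hn, ?_, ?_, ?_, ?_, ?_,
    ⟨SchoolChoice.mueff n, SchoolChoice.mueff_pareto hn, SchoolChoice.sum_mueff hn⟩, ?_⟩
  · exact fun i => SchoolChoice.rk_null_eq hn i rfl
  · exact (SchoolChoice.exP n hn).DA_stable (SchoolChoice.exP_hq1 hn)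
  · intro μ hμ
    funext a
    rw [SchoolChoice.stable_eq hn hμ a, SchoolChoice.DA_eq_mustar hn]
  · exact SchoolChoice.DA_pareto hn
  · exact SchoolChoice.bound_sum hn ((SchoolChoice.exP n hn).DA_stable (SchoolChoice.exP_hq1 hn)).1
      (fun a => le_of_eq (SchoolChoice.DA_bound hn a))
  · intro ν hν
    exact SchoolChoice.bound_sum hn hν.1
      (fun a => by have := hν.2 a; rwa [SchoolChoice.DA_bound hn a] at this)
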